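/- σ_3(6,10) ≤ 1/2: for all sufficiently large n and every e with e ≤ (1/4 − o(1))·C(n,3) or e ≥ (3/4 − o(1))·C(n,3), there exists a 3-uniform hypergraph on n vertices with e edges having no induced sub-hypergraph on 6 vertices with exactly 10 edges. -/

import Mathlib

open Finset
open scoped Classical

/-- `(n,e) →_r (m,f)`: every `r`-uniform hypergraph on `n` vertices with `e` edges
has an induced sub-hypergraph on `m` vertices with exactly `f` edges. -/
def PairArrows (r n e m f : ℕ) : Prop :=
  ∀ G : Finset (Finset (Fin n)), (∀ s ∈ G, s.card = r) → G.card = e →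
    ∃ S : Finset (Fin n), S.card = m ∧ (G.filter (fun t => t ⊆ S)).card = f

/-- The density `σ_r(m,f)`. -/
noncomputable def sigmaR (r m f : ℕ) : ℝ :=
  Filter.limsup
    (fun n : ℕ =>
      (((Finset.range (n.choose r + 1)).filter (fun e => PairArrows r n e m f)).card : ℝ) /
        (n.choose r : ℝ))
    Filter.atTop


def EdgeP (t : Finset ℕ) : Prop :=
  ∃ i : ℕ, (∀ x ∈ t, ∀ y ∈ t, x % 3^i = y % 3^i) ∧
    (∀ x ∈ t, ∀ y ∈ t, x ≠ y → x / 3^i % 3 ≠ y / 3^i % 3)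

noncomputable def edgesOf (S : Finset ℕ) : Finset (Finset ℕ) := (S.powersetCard 3).filter EdgeP

noncomputable def QS (S : Finset ℕ) (r : ℕ) : Finset ℕ := (S.filter (fun x => x % 3 = r)).image (· / 3)

lemma rainbow_repr {x y z : ℕ} (hxy : x%3≠y%3) (hxz : x%3≠z%3) (hyz : y%3≠z%3) :
    ∃ a b c, a%3=0 ∧ b%3=1 ∧ c%3=2 ∧ ({a,b,c} : Finset ℕ) = {x,y,z} := by
  have hx : x%3 = 0 ∨ x%3 = 1 ∨ x%3 = 2 := by omega
  have hy : y%3 = 0 ∨ y%3 = 1 ∨ y%3 = 2 := by omega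
  have hz : z%3 = 0 ∨ z%3 = 1 ∨ z%3 = 2 := by omega
  rcases hx with hx|hx|hx <;> rcases hy with hy|hy|hy <;> rcases hz with hz|hz|hz <;>
    first
      | omega
      | (exact ⟨x,y,z, hx, hy, hz, rfl⟩)
      | (exact ⟨x,z,y, hx, hz, hy, by ext w; simp [mem_insert]; tauto⟩)
      | (exact ⟨y,x,z, hy, hx, hz, by ext w; simp [mem_insert]; tauto⟩)
      | (exact ⟨y,z,x, hy, hz, hx, by ext w; simp [mem_insert]; tauto⟩)
      | (exact ⟨z,x,y, hz, hx, hy, by ext w; simp [mem_insert]; tauto⟩)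
      | (exact ⟨z,y,x, hz, hy, hx, by ext w; simp [mem_insert]; tauto⟩)

lemma card_rainbow (S : Finset ℕ) :
    ((S.powersetCard 3).filter (fun t => ∀ x ∈ t, ∀ y ∈ t, x ≠ y → x % 3 ≠ y % 3)).card
      = (S.filter (fun x => x%3 = 0)).card * (S.filter (fun x => x%3 = 1)).card *
        (S.filter (fun x => x%3 = 2)).card := by
  rw [← card_product, ← card_product]
  symm
  apply Finset.card_bij (fun p _ => ({p.1.1, p.1.2, p.2} : Finset ℕ))
  · rintro ⟨⟨a,b⟩,c⟩ hp
    simp only [mem_product, mem_filter] at hp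
    obtain ⟨⟨⟨haS, ha⟩, hbS, hb⟩, hcS, hc⟩ := hp
    simp only [mem_filter, mem_powersetCard]
    refine ⟨⟨?_, ?_⟩, ?_⟩
    · intro w hw
      simp only [mem_insert, mem_singleton] at hw
      rcases hw with rfl|rfl|rfl <;> assumption
    · rw [card_eq_three]
      exact ⟨a, b, c, by omega, by omega, by omega, rfl⟩
    · intro x hx y hy hxy
      simp only [mem_insert, mem_singleton] at hx hy
      rcases hx with rfl|rfl|rfl <;> rcases hy with rfl|rfl|rfl <;> omega
  · rintro ⟨⟨a,b⟩,c⟩ hp ⟨⟨a',b'⟩,c'⟩ hp' heq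
    simp only [mem_product, mem_filter] at hp hp'
    obtain ⟨⟨⟨haS, ha⟩, hbS, hb⟩, hcS, hc⟩ := hp
    obtain ⟨⟨⟨haS', ha'⟩, hbS', hb'⟩, hcS', hc'⟩ := hp'
    have h := Finset.ext_iff.mp heq
    have h1 := (h a').mpr (by simp)
    have h2 := (h b').mpr (by simp)
    have h3 := (h c').mpr (by simp)
    simp only [mem_insert, mem_singleton] at h1 h2 h3
    have : a' = a ∧ b' = b ∧ c' = c := by
      constructor
      · rcases h1 with rfl|rfl|rfl <;> omega
      constructor
      · rcases h2 with rfl|rfl|rfl <;> omega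
      · rcases h3 with rfl|rfl|rfl <;> omega
    simp [this.1, this.2.1, this.2.2]
  · intro t ht
    simp only [mem_filter, mem_powersetCard] at ht
    obtain ⟨⟨hsub, hcard⟩, hrb⟩ := ht
    obtain ⟨x, y, z, hxy, hxz, hyz, rfl⟩ := card_eq_three.mp hcard
    have hx : x ∈ ({x,y,z} : Finset ℕ) := by simp
    have hy : y ∈ ({x,y,z} : Finset ℕ) := by simp
    have hz : z ∈ ({x,y,z} : Finset ℕ) := by simp
    obtain ⟨a, b, c, ha, hb, hc, habc⟩ :=
      rainbow_repr (hrb x hx y hy hxy) (hrb x hx z hz hxz) (hrb y hy z hz hyz)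
    have haS : a ∈ S := hsub (habc ▸ (by simp : a ∈ ({a,b,c}:Finset ℕ)))
    have hbS : b ∈ S := hsub (habc ▸ (by simp : b ∈ ({a,b,c}:Finset ℕ)))
    have hcS : c ∈ S := hsub (habc ▸ (by simp : c ∈ ({a,b,c}:Finset ℕ)))
    exact ⟨((a,b),c), by simp [mem_product, mem_filter, haS, hbS, hcS, ha, hb, hc], habc⟩
-- depends on b.lean content (will concatenate later)
lemma card_mono_part (S : Finset ℕ) (r : ℕ) (hr : r < 3) :
    ((S.powersetCard 3).filter (fun t => (∀ x ∈ t, x % 3 = r) ∧ EdgeP (t.image (· / 3)))).card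
      = (edgesOf (QS S r)).card := by
  apply Finset.card_bij (fun t _ => t.image (· / 3))
  · intro t ht
    simp only [mem_filter, mem_powersetCard] at ht
    obtain ⟨⟨hsub, hcard⟩, hmod, hedge⟩ := ht
    simp only [edgesOf, mem_filter, mem_powersetCard]
    refine ⟨⟨?_, ?_⟩, hedge⟩
    · intro q hq
      simp only [mem_image] at hq
      obtain ⟨x, hx, rfl⟩ := hq
      exact mem_image_of_mem _ (mem_filter.mpr ⟨hsub hx, hmod x hx⟩)
    · rw [card_image_of_injOn, hcard]
      intro x hx y hy hxy
      have hxy' : x / 3 = y / 3 := hxy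
      have := hmod x hx
      have := hmod y hy
      omega
  · intro t ht t' ht' heq
    simp only [mem_filter, mem_powersetCard] at ht ht'
    obtain ⟨⟨hsub, hcard⟩, hmod, _⟩ := ht
    obtain ⟨⟨hsub', hcard'⟩, hmod', _⟩ := ht'
    apply Finset.Subset.antisymm
    · intro x hx
      have : x / 3 ∈ t'.image (· / 3) := heq ▸ mem_image_of_mem _ hx
      simp only [mem_image] at this
      obtain ⟨y, hy, hxy⟩ := this
      have hxy' : y / 3 = x / 3 := hxy
      have h1 := hmod x hx
      have h2 := hmod' y hy
      have : y = x := by omega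
      exact this ▸ hy
    · intro x hx
      have : x / 3 ∈ t.image (· / 3) := heq ▸ mem_image_of_mem _ hx
      simp only [mem_image] at this
      obtain ⟨y, hy, hxy⟩ := this
      have hxy' : y / 3 = x / 3 := hxy
      have h1 := hmod' x hx
      have h2 := hmod y hy
      have : y = x := by omega
      exact this ▸ hy
  · intro u hu
    simp only [edgesOf, mem_filter, mem_powersetCard] at hu
    obtain ⟨⟨hsub, hcard⟩, hedge⟩ := hu
    refine ⟨u.image (fun q => 3*q + r), ?_, ?_⟩
    · simp only [mem_filter, mem_powersetCard]
      have himg : (u.image (fun q => 3*q + r)).image (· / 3) = u := by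
        rw [Finset.image_image]
        have : ((· / 3) ∘ (fun q => 3*q+r)) = id := by
          funext q; simp only [Function.comp, id]; omega
        rw [this, Finset.image_id]
      refine ⟨⟨?_, ?_⟩, ?_, ?_⟩
      · intro x hx
        simp only [mem_image] at hx
        obtain ⟨q, hq, rfl⟩ := hx
        have := hsub hq
        simp only [QS, mem_image, mem_filter] at this
        obtain ⟨y, ⟨hyS, hym⟩, hyq⟩ := this
        have : 3*q + r = y := by omega
        exact this ▸ hyS
      · rw [card_image_of_injOn, hcard]
        intro x _ y _ h
        have h' : 3*x + r = 3*y + r := h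
        omega
      · intro x hx
        simp only [mem_image] at hx
        obtain ⟨q, _, rfl⟩ := hx
        omega
      · rw [himg]; exact hedge
    · rw [Finset.image_image]
      have : ((· / 3) ∘ (fun q => 3*q+r)) = id := by
        funext q; simp only [Function.comp, id]; omega
      rw [this, Finset.image_id]
lemma mod_pow_succ_aux (x i : ℕ) : x % 3^(i+1) = 3 * (x / 3 % 3^i) + x % 3 := by
  have h1 : x / 3 % 3^i = x % (3 * 3^i) / 3 := (Nat.mod_mul_right_div_self x 3 (3^i)).symm
  have h2 : x % 3 = x % (3 * 3^i) % 3 := (Nat.mod_mod_of_dvd x ⟨3^i, rfl⟩).symm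
  have h3 : (3:ℕ)^(i+1) = 3 * 3^i := by ring
  rw [h3, h1, h2, Nat.div_add_mod]

lemma div_pow_succ_aux (x i : ℕ) : x / 3^(i+1) = (x / 3) / 3^i := by
  rw [Nat.div_div_eq_div_mul]; ring_nf

lemma edgeP_iff (t : Finset ℕ) : EdgeP t ↔
    ((∀ x ∈ t, ∀ y ∈ t, x ≠ y → x % 3 ≠ y % 3) ∨
     ((∀ x ∈ t, ∀ y ∈ t, x % 3 = y % 3) ∧ EdgeP (t.image (· / 3)))) := by
  constructor
  · rintro ⟨i, hmod, hdig⟩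
    match i with
    | 0 =>
      left
      intro x hx y hy hxy
      simpa using hdig x hx y hy hxy
    | (i+1) =>
      right
      have hm3 : ∀ x ∈ t, ∀ y ∈ t, x % 3 = y % 3 := by
        intro x hx y hy
        have := hmod x hx y hy
        have h1 := mod_pow_succ_aux x i
        have h2 := mod_pow_succ_aux y i
        omega
      refine ⟨hm3, ⟨i, ?_, ?_⟩⟩
      · intro u hu v hv
        simp only [mem_image] at hu hv
        obtain ⟨x, hx, rfl⟩ := hu
        obtain ⟨y, hy, rfl⟩ := hv
        have := hmod x hx y hy
        have h1 := mod_pow_succ_aux x i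
        have h2 := mod_pow_succ_aux y i
        omega
      · intro u hu v hv huv
        simp only [mem_image] at hu hv
        obtain ⟨x, hx, rfl⟩ := hu
        obtain ⟨y, hy, rfl⟩ := hv
        have hne : x ≠ y := by rintro rfl; exact huv rfl
        have := hdig x hx y hy hne
        rw [div_pow_succ_aux x i, div_pow_succ_aux y i] at this
        exact this
  · rintro (h | ⟨hm3, ⟨i, hmod, hdig⟩⟩)
    · exact ⟨0, by simp [pow_zero, Nat.mod_one], by simpa [pow_zero, Nat.div_one] using h⟩
    · refine ⟨i+1, ?_, ?_⟩
      · intro x hx y hy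
        have h1 := hmod (x/3) (mem_image_of_mem _ hx) (y/3) (mem_image_of_mem _ hy)
        have h2 := hm3 x hx y hy
        rw [mod_pow_succ_aux x i, mod_pow_succ_aux y i, h1, h2]
      · intro x hx y hy hxy
        have hq : x / 3 ≠ y / 3 := by
          intro h
          have h2 := hm3 x hx y hy
          omega
        have := hdig (x/3) (mem_image_of_mem _ hx) (y/3) (mem_image_of_mem _ hy) hq
        rw [div_pow_succ_aux x i, div_pow_succ_aux y i]
        exact this

lemma card_edges_decomp (S : Finset ℕ) :
    (edgesOf S).card = (S.filter (fun x => x%3 = 0)).card * (S.filter (fun x => x%3 = 1)).card *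
        (S.filter (fun x => x%3 = 2)).card
      + ((edgesOf (QS S 0)).card + (edgesOf (QS S 1)).card + (edgesOf (QS S 2)).card) := by
  classical
  set pc := S.powersetCard 3 with hpc
  set R : Finset ℕ → Prop := fun t => ∀ x ∈ t, ∀ y ∈ t, x ≠ y → x % 3 ≠ y % 3 with hR
  set C : ℕ → Finset ℕ → Prop := fun r t => (∀ x ∈ t, x % 3 = r) ∧ EdgeP (t.image (· / 3)) with hC
  have hiff : ∀ t ∈ pc, EdgeP t ↔ (R t ∨ (C 0 t ∨ C 1 t ∨ C 2 t)) := by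
    intro t ht
    simp only [hpc, mem_powersetCard] at ht
    have hne : t.Nonempty := by
      rw [← Finset.card_pos, ht.2]; norm_num
    obtain ⟨w, hw⟩ := hne
    rw [edgeP_iff]
    constructor
    · rintro (h | ⟨hconst, hE⟩)
      · exact Or.inl h
      · right
        have hr : w % 3 = 0 ∨ w % 3 = 1 ∨ w % 3 = 2 := by omega
        have hall : ∀ r, w % 3 = r → ∀ x ∈ t, x % 3 = r := by
          intro r hwr x hx
          rw [← hwr]; exact hconst x hx w hw
        rcases hr with h0|h1|h2
        · exact Or.inl ⟨hall 0 h0, hE⟩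
        · exact Or.inr (Or.inl ⟨hall 1 h1, hE⟩)
        · exact Or.inr (Or.inr ⟨hall 2 h2, hE⟩)
    · rintro (h | h)
      · exact Or.inl h
      · right
        rcases h with ⟨h, hE⟩|⟨h, hE⟩|⟨h, hE⟩ <;>
          exact ⟨fun x hx y hy => by rw [h x hx, h y hy], hE⟩
  have hsplit : edgesOf S =
      (pc.filter R) ∪ ((pc.filter (C 0)) ∪ ((pc.filter (C 1)) ∪ (pc.filter (C 2)))) := by
    unfold edgesOf
    rw [filter_congr hiff, filter_or, filter_or, filter_or]
  have htwo : ∀ t ∈ pc, ∃ x ∈ t, ∃ y ∈ t, x ≠ y := by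
    intro t ht
    simp only [hpc, mem_powersetCard] at ht
    exact Finset.one_lt_card.mp (by omega)
  have hdRC : ∀ r, Disjoint (pc.filter R) (pc.filter (C r)) := by
    intro r
    rw [Finset.disjoint_filter]
    rintro t ht hRt ⟨hCr, _⟩
    obtain ⟨x, hx, y, hy, hxy⟩ := htwo t ht
    exact hRt x hx y hy hxy (by rw [hCr x hx, hCr y hy])
  have hdCC : ∀ r r', r ≠ r' → Disjoint (pc.filter (C r)) (pc.filter (C r')) := by
    intro r r' hrr
    rw [Finset.disjoint_filter]
    rintro t ht ⟨hCr, _⟩ ⟨hCr', _⟩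
    obtain ⟨x, hx, _, _, _⟩ := htwo t ht
    exact hrr (by rw [← hCr x hx, hCr' x hx])
  rw [hsplit]
  rw [card_union_of_disjoint, card_union_of_disjoint, card_union_of_disjoint]
  · rw [card_rainbow, card_mono_part S 0 (by norm_num), card_mono_part S 1 (by norm_num),
      card_mono_part S 2 (by norm_num)]
    ring
  · exact hdCC 1 2 (by norm_num)
  · rw [disjoint_union_right]
    exact ⟨hdCC 0 1 (by norm_num), hdCC 0 2 (by norm_num)⟩
  · rw [disjoint_union_right, disjoint_union_right]
    exact ⟨hdRC 0, hdRC 1, hdRC 2⟩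
def fB : ℕ → ℕ := fun n =>
  if n ≤ 2 then 0 else if n = 3 then 1 else if n = 4 then 2 else if n = 5 then 4 else 8

lemma fB_step : ∀ a < 7, ∀ b < 7, ∀ c < 7, a + b + c ≤ 6 →
    a*b*c + (fB a + fB b + fB c) ≤ fB (a+b+c) := by decide

lemma QS_subset (S : Finset ℕ) (r k : ℕ) (hS : S ⊆ Finset.range (3^(k+1))) :
    QS S r ⊆ Finset.range (3^k) := by
  intro q hq
  simp only [QS, mem_image, mem_filter] at hq
  obtain ⟨x, ⟨hxS, _⟩, rfl⟩ := hq
  have hx := Finset.mem_range.mp (hS hxS)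
  have h3 : (3:ℕ)^(k+1) = 3 * 3^k := by ring
  rw [Finset.mem_range]
  omega

lemma QS_card (S : Finset ℕ) (r : ℕ) (hr : r < 3) :
    (QS S r).card = (S.filter (fun x => x % 3 = r)).card := by
  apply Finset.card_image_of_injOn
  intro x hx y hy hxy
  simp only [Finset.coe_filter, Set.mem_setOf_eq] at hx hy
  have hxy' : x / 3 = y / 3 := hxy
  omega

lemma card_parts (S : Finset ℕ) :
    S.card = (S.filter (fun x => x%3 = 0)).card + (S.filter (fun x => x%3 = 1)).card +
      (S.filter (fun x => x%3 = 2)).card := by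
  have h := Finset.card_eq_sum_card_fiberwise
    (f := fun x => x % 3) (s := S) (t := Finset.range 3) (fun x _ => by simp; omega)
  rw [h, Finset.sum_range_succ, Finset.sum_range_succ, Finset.sum_range_one]

lemma edges_card_le_fB (k : ℕ) : ∀ S : Finset ℕ, S ⊆ Finset.range (3^k) → S.card ≤ 6 →
    (edgesOf S).card ≤ fB S.card := by
  induction k with
  | zero =>
    intro S hsub hcard
    have h1 : S.card ≤ 1 := by
      calc S.card ≤ (Finset.range (3^0)).card := Finset.card_le_card hsub
        _ = 1 := by simp
    have : S.powersetCard 3 = ∅ := by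
      rw [Finset.powersetCard_eq_empty]
      omega
    simp [edgesOf, this]
  | succ k ih =>
    intro S hsub hcard
    rw [card_edges_decomp]
    have hparts := card_parts S
    have h0 := ih (QS S 0) (QS_subset S 0 k hsub) (by rw [QS_card S 0 (by norm_num)]; omega)
    have h1 := ih (QS S 1) (QS_subset S 1 k hsub) (by rw [QS_card S 1 (by norm_num)]; omega)
    have h2 := ih (QS S 2) (QS_subset S 2 k hsub) (by rw [QS_card S 2 (by norm_num)]; omega)
    rw [QS_card S 0 (by norm_num)] at h0
    rw [QS_card S 1 (by norm_num)] at h1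
    rw [QS_card S 2 (by norm_num)] at h2
    have hstep := fB_step (S.filter (fun x => x%3 = 0)).card (by omega)
      (S.filter (fun x => x%3 = 1)).card (by omega)
      (S.filter (fun x => x%3 = 2)).card (by omega) (by omega)
    rw [hparts]
    omega
noncomputable def Ecnt (n : ℕ) : ℕ := (edgesOf (Finset.range n)).card

lemma QS_range (n r : ℕ) (hr : r < 3) : QS (Finset.range n) r = Finset.range ((n + 2 - r)/3) := by
  ext q
  simp only [QS, mem_image, mem_filter, Finset.mem_range]
  constructor
  · rintro ⟨x, ⟨hx, hxr⟩, rfl⟩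
    omega
  · intro hq
    exact ⟨3*q + r, ⟨by omega, by omega⟩, by omega⟩

lemma filter_range_card (n r : ℕ) (hr : r < 3) :
    ((Finset.range n).filter (fun x => x % 3 = r)).card = (n + 2 - r)/3 := by
  rw [← QS_card _ _ hr, QS_range n r hr, Finset.card_range]

lemma Ecnt_rec (n : ℕ) :
    Ecnt n = ((n+2)/3) * ((n+1)/3) * (n/3) + (Ecnt ((n+2)/3) + Ecnt ((n+1)/3) + Ecnt (n/3)) := by
  unfold Ecnt
  rw [card_edges_decomp]
  rw [QS_range n 0 (by norm_num), QS_range n 1 (by norm_num), QS_range n 2 (by norm_num),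
    filter_range_card n 0 (by norm_num), filter_range_card n 1 (by norm_num),
    filter_range_card n 2 (by norm_num)]
  norm_num

lemma six_choose3 (n : ℕ) : 6 * n.choose 3 = (n-2) * ((n-1) * n) := by
  have h := Nat.descFactorial_eq_factorial_mul_choose n 3
  simp [Nat.descFactorial, Nat.factorial] at h
  omega
lemma Ecnt_small (n : ℕ) (h : n < 3) : Ecnt n = 0 := by
  unfold Ecnt edgesOf
  have : (Finset.range n).powersetCard 3 = ∅ := by
    rw [Finset.powersetCard_eq_empty, Finset.card_range]
    omega
  simp [this]

lemma upper_key (a b c : ℕ) : 24*(a*b*c) + (a^3 + b^3 + c^3) ≤ (a+b+c)^3 := by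
  zify
  nlinarith [mul_nonneg (Int.ofNat_nonneg a) (sq_nonneg ((b:ℤ) - c)),
    mul_nonneg (Int.ofNat_nonneg b) (sq_nonneg ((a:ℤ) - c)),
    mul_nonneg (Int.ofNat_nonneg c) (sq_nonneg ((a:ℤ) - b))]

lemma Ecnt_upper : ∀ n : ℕ, 24 * Ecnt n + n ≤ n^3 := by
  intro n
  induction n using Nat.strong_induction_on with
  | _ n ih =>
    rcases lt_or_ge n 3 with h|h
    · rw [Ecnt_small n h]
      rcases (by omega : n = 0 ∨ n = 1 ∨ n = 2) with rfl|rfl|rfl <;> norm_num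
    · rw [Ecnt_rec n]
      have h0 := ih ((n+2)/3) (by omega)
      have h1 := ih ((n+1)/3) (by omega)
      have h2 := ih (n/3) (by omega)
      have hk := upper_key ((n+2)/3) ((n+1)/3) (n/3)
      rw [show (n+2)/3 + (n+1)/3 + n/3 = n from by omega] at hk
      omega

lemma lower_key (n : ℕ) (hn : 3 ≤ n) :
    n.choose 3 ≤ 4 * (((n+2)/3) * ((n+1)/3) * (n/3))
      + (((n+2)/3).choose 3 + ((n+1)/3).choose 3 + (n/3).choose 3) := by
  rcases lt_or_ge n 6 with h|h
  · interval_cases n <;> decide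
  · obtain ⟨k, hk⟩ : ∃ k, n / 3 = k + 2 := ⟨n/3 - 2, by omega⟩
    have ht : n % 3 = 0 ∨ n % 3 = 1 ∨ n % 3 = 2 := by omega
    have c6m : 6 * (n/3).choose 3 = k * ((k+1) * (k+2)) := by
      rw [six_choose3, show n/3 - 2 = k from by omega, show n/3 - 1 = k+1 from by omega,
        show n/3 = k+2 from hk]
    rcases ht with ht|ht|ht
    · have e2 : (n+2)/3 = n/3 := by omega
      have e1 : (n+1)/3 = n/3 := by omega
      rw [e2, e1]
      have c6n : 6 * n.choose 3 = (3*k+4) * ((3*k+5) * (3*k+6)) := by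
        rw [six_choose3, show n - 2 = 3*k+4 from by omega, show n - 1 = 3*k+5 from by omega,
          show n = 3*k+6 from by omega]
      have hprod : n/3 * (n/3) * (n/3) = (k+2) * ((k+2) * (k+2)) := by rw [hk]; ring
      have key : (3*k+4) * ((3*k+5) * (3*k+6)) ≤ 24 * ((k+2) * ((k+2) * (k+2)))
          + 3 * (k * ((k+1) * (k+2))) := by nlinarith [sq_nonneg k]
      omega
    · have e2 : (n+2)/3 = n/3 + 1 := by omega
      have e1 : (n+1)/3 = n/3 := by omega
      rw [e2, e1]
      have c6n : 6 * n.choose 3 = (3*k+5) * ((3*k+6) * (3*k+7)) := by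
        rw [six_choose3, show n - 2 = 3*k+5 from by omega, show n - 1 = 3*k+6 from by omega,
          show n = 3*k+7 from by omega]
      have c6m1 : 6 * (n/3 + 1).choose 3 = (k+1) * ((k+2) * (k+3)) := by
        rw [six_choose3, show n/3 + 1 - 2 = k+1 from by omega,
          show n/3 + 1 - 1 = k+2 from by omega, show n/3 + 1 = k+3 from by omega]
      have hprod : (n/3 + 1) * (n/3) * (n/3) = (k+3) * ((k+2) * (k+2)) := by rw [hk]; ring
      have key : (3*k+5) * ((3*k+6) * (3*k+7)) ≤ 24 * ((k+3) * ((k+2) * (k+2)))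
          + ((k+1) * ((k+2) * (k+3)) + 2 * (k * ((k+1) * (k+2)))) := by nlinarith [sq_nonneg k]
      omega
    · have e2 : (n+2)/3 = n/3 + 1 := by omega
      have e1 : (n+1)/3 = n/3 + 1 := by omega
      rw [e2, e1]
      have c6n : 6 * n.choose 3 = (3*k+6) * ((3*k+7) * (3*k+8)) := by
        rw [six_choose3, show n - 2 = 3*k+6 from by omega, show n - 1 = 3*k+7 from by omega,
          show n = 3*k+8 from by omega]
      have c6m1 : 6 * (n/3 + 1).choose 3 = (k+1) * ((k+2) * (k+3)) := by
        rw [six_choose3, show n/3 + 1 - 2 = k+1 from by omega,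
          show n/3 + 1 - 1 = k+2 from by omega, show n/3 + 1 = k+3 from by omega]
      have hprod : (n/3 + 1) * (n/3 + 1) * (n/3) = (k+3) * ((k+3) * (k+2)) := by rw [hk]; ring
      have key : (3*k+6) * ((3*k+7) * (3*k+8)) ≤ 24 * ((k+3) * ((k+3) * (k+2)))
          + (2 * ((k+1) * ((k+2) * (k+3))) + k * ((k+1) * (k+2))) := by nlinarith [sq_nonneg k]
      omega

lemma Ecnt_lower : ∀ n : ℕ, n.choose 3 ≤ 4 * Ecnt n := by
  intro n
  induction n using Nat.strong_induction_on with
  | _ n ih =>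
    rcases lt_or_ge n 3 with h|h
    · rw [Nat.choose_eq_zero_of_lt h]
      omega
    · rw [Ecnt_rec n]
      have h0 := ih ((n+2)/3) (by omega)
      have h1 := ih ((n+1)/3) (by omega)
      have h2 := ih (n/3) (by omega)
      have hk := lower_key n h
      omega

lemma Ecnt_le_choose (n : ℕ) : Ecnt n ≤ n.choose 3 := by
  have h := Finset.card_le_card (Finset.filter_subset EdgeP ((Finset.range n).powersetCard 3))
  rw [Finset.card_powersetCard, Finset.card_range] at h
  exact h
noncomputable def HG (n : ℕ) : Finset (Finset (Fin n)) :=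
  ((Finset.univ : Finset (Fin n)).powersetCard 3).filter (fun s => EdgeP (s.image Fin.val))

lemma filter_HG_card (n : ℕ) (S : Finset (Fin n)) :
    ((HG n).filter (fun t => t ⊆ S)).card = (edgesOf (S.image Fin.val)).card := by
  apply Finset.card_bij (fun t _ => t.image Fin.val)
  · intro t ht
    simp only [HG, mem_filter, mem_powersetCard] at ht
    obtain ⟨⟨⟨_, hcard⟩, hE⟩, hsub⟩ := ht
    simp only [edgesOf, mem_filter, mem_powersetCard]
    exact ⟨⟨Finset.image_subset_image hsub,
      by rw [Finset.card_image_of_injective _ Fin.val_injective, hcard]⟩, hE⟩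
  · intro t _ t' _ heq
    exact Finset.image_injective Fin.val_injective heq
  · intro u hu
    simp only [edgesOf, mem_filter, mem_powersetCard] at hu
    obtain ⟨⟨hsub, hcard⟩, hE⟩ := hu
    refine ⟨S.filter (fun x => x.val ∈ u), ?_, ?_⟩
    · have himg : (S.filter (fun x => x.val ∈ u)).image Fin.val = u := by
        ext y
        simp only [mem_image, mem_filter]
        constructor
        · rintro ⟨x, ⟨_, hxu⟩, rfl⟩; exact hxu
        · intro hy
          have := hsub hy
          simp only [mem_image] at this
          obtain ⟨x, hxS, rfl⟩ := this
          exact ⟨x, ⟨hxS, hy⟩, rfl⟩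
      simp only [HG, mem_filter, mem_powersetCard]
      refine ⟨⟨⟨Finset.subset_univ _, ?_⟩, by rw [himg]; exact hE⟩, Finset.filter_subset _ _⟩
      rw [← Finset.card_image_of_injective _ Fin.val_injective, himg, hcard]
    · ext y
      simp only [mem_image, mem_filter]
      constructor
      · rintro ⟨x, ⟨_, hxu⟩, rfl⟩; exact hxu
      · intro hy
        have := hsub hy
        simp only [mem_image] at this
        obtain ⟨x, hxS, rfl⟩ := this
        exact ⟨x, ⟨hxS, hy⟩, rfl⟩

lemma image_val_univ (n : ℕ) : (Finset.univ : Finset (Fin n)).image Fin.val = Finset.range n := by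
  ext x
  simp only [Finset.mem_image, Finset.mem_range, Finset.mem_univ, true_and]
  constructor
  · rintro ⟨i, _, rfl⟩; exact i.isLt
  · intro hx; exact ⟨⟨x, hx⟩, rfl⟩

lemma HG_card (n : ℕ) : (HG n).card = Ecnt n := by
  have h := filter_HG_card n Finset.univ
  rw [Finset.filter_true_of_mem (fun t _ => Finset.subset_univ t)] at h
  rw [h, image_val_univ]
  rfl

lemma HG_six_bound (n : ℕ) (S : Finset (Fin n)) (hS : S.card = 6) :
    ((HG n).filter (fun t => t ⊆ S)).card ≤ 8 := by
  rw [filter_HG_card n S]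
  have hsub : S.image Fin.val ⊆ Finset.range (3^n) := by
    intro x hx
    simp only [mem_image] at hx
    obtain ⟨i, _, rfl⟩ := hx
    exact Finset.mem_range.mpr (lt_trans i.isLt (Nat.lt_pow_self (n := n) (by norm_num)))
  have hc : (S.image Fin.val).card = 6 := by
    rw [Finset.card_image_of_injective _ Fin.val_injective, hS]
  have := edges_card_le_fB n (S.image Fin.val) hsub (by omega)
  rw [hc] at this
  exact this
lemma low_case (n e : ℕ) (he : e ≤ Ecnt n) :
    ∃ G : Finset (Finset (Fin n)), (∀ s ∈ G, s.card = 3) ∧ G.card = e ∧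
      ∀ S : Finset (Fin n), S.card = 6 → (G.filter (fun t => t ⊆ S)).card ≠ 10 := by
  obtain ⟨G, hGsub, hGcard⟩ := Finset.exists_subset_card_eq (by rw [HG_card]; exact he :
    e ≤ (HG n).card)
  refine ⟨G, ?_, hGcard, ?_⟩
  · intro s hs
    have := hGsub hs
    simp only [HG, mem_filter, mem_powersetCard] at this
    exact this.1.2
  · intro S hS
    have h1 : (G.filter (fun t => t ⊆ S)).card ≤ ((HG n).filter (fun t => t ⊆ S)).card :=
      Finset.card_le_card (Finset.filter_subset_filter _ hGsub)
    have h2 := HG_six_bound n S hS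
    omega

lemma high_case (n e : ℕ) (h1 : n.choose 3 - Ecnt n ≤ e) (h2 : e ≤ n.choose 3) :
    ∃ G : Finset (Finset (Fin n)), (∀ s ∈ G, s.card = 3) ∧ G.card = e ∧
      ∀ S : Finset (Fin n), S.card = 6 → (G.filter (fun t => t ⊆ S)).card ≠ 10 := by
  set T : Finset (Finset (Fin n)) := (Finset.univ : Finset (Fin n)).powersetCard 3 with hT
  have hTcard : T.card = n.choose 3 := by
    rw [hT, Finset.card_powersetCard, Finset.card_univ, Fintype.card_fin]
  have hHGT : HG n ⊆ T := Finset.filter_subset _ _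
  have hcompcard : (T \ HG n).card = n.choose 3 - Ecnt n := by
    rw [Finset.card_sdiff_of_subset hHGT, hTcard, HG_card]
  have ha1 : (T \ HG n).card ≤ e := by rw [hcompcard]; exact h1
  have ha2 : e ≤ T.card := by rw [hTcard]; exact h2
  obtain ⟨G, hGsup, hGsub, hGcard⟩ := Finset.exists_subsuperset_card_eq
    (Finset.sdiff_subset : T \ HG n ⊆ T) ha1 ha2
  refine ⟨G, ?_, hGcard, ?_⟩
  · intro s hs
    have := hGsub hs
    simp only [hT, mem_powersetCard] at this
    exact this.2
  · intro S hS
    have hTS : T.filter (fun t => t ⊆ S) = S.powersetCard 3 := by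
      ext t
      simp only [hT, mem_filter, mem_powersetCard]
      constructor
      · rintro ⟨⟨_, hc⟩, hsub⟩; exact ⟨hsub, hc⟩
      · rintro ⟨hsub, hc⟩; exact ⟨⟨Finset.subset_univ _, hc⟩, hsub⟩
    have hsplit : (T \ HG n).filter (fun t => t ⊆ S)
        = T.filter (fun t => t ⊆ S) \ (HG n).filter (fun t => t ⊆ S) := by
      ext t
      simp only [mem_filter, Finset.mem_sdiff]
      tauto
    have hcard20 : (T.filter (fun t => t ⊆ S)).card = 20 := by
      rw [hTS, Finset.card_powersetCard, hS]
      decide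
    have h8 := HG_six_bound n S hS
    have hge : 12 ≤ ((T \ HG n).filter (fun t => t ⊆ S)).card := by
      rw [hsplit]
      have := Finset.le_card_sdiff ((HG n).filter (fun t => t ⊆ S))
        (T.filter (fun t => t ⊆ S))
      omega
    have hmono : ((T \ HG n).filter (fun t => t ⊆ S)).card
        ≤ (G.filter (fun t => t ⊆ S)).card :=
      Finset.card_le_card (Finset.filter_subset_filter _ hGsup)
    omega
noncomputable def gf (n : ℕ) : ℝ := (Ecnt n : ℝ) / (n.choose 3 : ℝ) - 1/4

lemma choose3_pos {n : ℕ} (hn : 3 ≤ n) : (0:ℝ) < (n.choose 3 : ℝ) := by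
  have := Nat.choose_pos (k := 3) hn
  exact_mod_cast this

lemma gf_nonneg {n : ℕ} (hn : 3 ≤ n) : 0 ≤ gf n := by
  have hC := choose3_pos hn
  have hE : ((n.choose 3 : ℕ) : ℝ) ≤ 4 * (Ecnt n : ℝ) := by
    exact_mod_cast Ecnt_lower n
  unfold gf
  rw [sub_nonneg, le_div_iff₀ hC]
  linarith

lemma cast_six_choose3 {n : ℕ} (hn : 3 ≤ n) :
    6 * ((n.choose 3 : ℕ) : ℝ) = ((n:ℝ)-2) * (((n:ℝ)-1) * (n:ℝ)) := by
  have h := six_choose3 n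
  have h2 : (2:ℕ) ≤ n := by omega
  have h1 : (1:ℕ) ≤ n := by omega
  have := congrArg (fun x : ℕ => (x : ℝ)) h
  push_cast [Nat.cast_sub h2, Nat.cast_sub h1] at this
  convert this using 1 <;> ring

lemma gf_le {n : ℕ} (hn : 3 ≤ n) : gf n ≤ 3/4 * ((n:ℝ) - 2)⁻¹ := by
  have hC := choose3_pos hn
  have hn2 : (0:ℝ) < (n:ℝ) - 2 := by
    have : (3:ℝ) ≤ (n:ℝ) := by exact_mod_cast hn
    linarith
  have hup : 24 * (Ecnt n : ℝ) + (n:ℝ) ≤ (n:ℝ)^3 := by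
    have := Ecnt_upper n
    exact_mod_cast this
  have hc6 := cast_six_choose3 hn
  have key : (Ecnt n : ℝ) / (n.choose 3 : ℝ) ≤ ((n:ℝ)+1) / (4*((n:ℝ)-2)) := by
    rw [div_le_div_iff₀ hC (by linarith)]
    nlinarith [mul_le_mul_of_nonneg_right hup (le_of_lt hn2)]
  have heq : ((n:ℝ)+1) / (4*((n:ℝ)-2)) - 1/4 = 3/4 * ((n:ℝ) - 2)⁻¹ := by
    field_simp
    ring
  unfold gf
  linarith [key, heq.le, heq.ge]

lemma gf_tendsto : Filter.Tendsto gf Filter.atTop (nhds 0) := by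
  have hbig : Filter.Tendsto (fun n : ℕ => (n:ℝ) - 2) Filter.atTop Filter.atTop := by
    have := Filter.tendsto_atTop_add_const_right Filter.atTop (-2 : ℝ)
      tendsto_natCast_atTop_atTop
    simpa [sub_eq_add_neg] using this
  have hinv : Filter.Tendsto (fun n : ℕ => ((n:ℝ) - 2)⁻¹) Filter.atTop (nhds 0) :=
    hbig.inv_tendsto_atTop
  have hh : Filter.Tendsto (fun n : ℕ => 3/4 * ((n:ℝ) - 2)⁻¹) Filter.atTop (nhds 0) := by
    simpa using hinv.const_mul (3/4 : ℝ)
  apply tendsto_of_tendsto_of_tendsto_of_le_of_le' tendsto_const_nhds hh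
  · filter_upwards [Filter.eventually_ge_atTop 3] with n hn
    exact gf_nonneg hn
  · filter_upwards [Filter.eventually_ge_atTop 3] with n hn
    exact gf_le hn

lemma not_PA_low (n e : ℕ) (he : e ≤ Ecnt n) : ¬ PairArrows 3 n e 6 10 := by
  obtain ⟨G, h3, hcard, hno⟩ := low_case n e he
  intro hPA
  obtain ⟨S, hS6, h10⟩ := hPA G h3 hcard
  exact hno S hS6 h10

lemma not_PA_high (n e : ℕ) (h1 : n.choose 3 - Ecnt n ≤ e) (h2 : e ≤ n.choose 3) :
    ¬ PairArrows 3 n e 6 10 := by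
  obtain ⟨G, h3, hcard, hno⟩ := high_case n e h1 h2
  intro hPA
  obtain ⟨S, hS6, h10⟩ := hPA G h3 hcard
  exact hno S hS6 h10

/-- `σ_3(6,10) ≤ 1/2`: there is a function `g = o(1)` such that for all sufficiently
large `n`, every `e ≤ (1/4 - g n)·C(n,3)` and every `e ≥ (3/4 - g n)·C(n,3)` is
realised by a 3-graph on `n` vertices with no induced sub-hypergraph on 6 vertices
and exactly 10 edges. -/
theorem sigma_six_ten_le_half :
    sigmaR 3 6 10 ≤ 1 / 2 ∧
    ∃ g : ℕ → ℝ, Filter.Tendsto g Filter.atTop (nhds 0) ∧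
      ∃ N : ℕ, ∀ n ≥ N, ∀ e ≤ n.choose 3,
        ((e : ℝ) ≤ (1 / 4 - g n) * (n.choose 3 : ℝ) ∨
          (3 / 4 - g n) * (n.choose 3 : ℝ) ≤ (e : ℝ)) →
        ∃ G : Finset (Finset (Fin n)), (∀ s ∈ G, s.card = 3) ∧ G.card = e ∧
          ¬ ∃ S : Finset (Fin n), S.card = 6 ∧ (G.filter (fun t => t ⊆ S)).card = 10 := by
  constructor
  · -- limsup part
    unfold sigmaR
    have hev : ∀ᶠ n in Filter.atTop,
        (((Finset.range (n.choose 3 + 1)).filter (fun e => PairArrows 3 n e 6 10)).card : ℝ) /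
          (n.choose 3 : ℝ) ≤ (fun _ : ℕ => (1/2 : ℝ)) n := by
      filter_upwards [Filter.eventually_ge_atTop 3] with n hn
      have hC := choose3_pos hn
      have hsub : (Finset.range (n.choose 3 + 1)).filter (fun e => PairArrows 3 n e 6 10)
          ⊆ Finset.Ioo (Ecnt n) (n.choose 3 - Ecnt n) := by
        intro e hee
        simp only [Finset.mem_filter, Finset.mem_range] at hee
        obtain ⟨her, hPA⟩ := hee
        rw [Finset.mem_Ioo]
        constructor
        · by_contra h
          push_neg at h
          exact not_PA_low n e h hPA
        · by_contra h
          push_neg at h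
          exact not_PA_high n e h (by omega) hPA
      have hcard := Finset.card_le_card hsub
      rw [Nat.card_Ioo] at hcard
      have hEl := Ecnt_lower n
      have h2 : 2 * ((Finset.range (n.choose 3 + 1)).filter
          (fun e => PairArrows 3 n e 6 10)).card ≤ n.choose 3 := by omega
      rw [div_le_iff₀ hC]
      have hc := (Nat.cast_le (α := ℝ)).mpr h2
      push_cast at hc
      linarith
    have hco : Filter.IsCoboundedUnder (· ≤ ·) Filter.atTop
        (fun n : ℕ =>
          (((Finset.range (n.choose 3 + 1)).filter (fun e => PairArrows 3 n e 6 10)).card : ℝ) /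
            (n.choose 3 : ℝ)) :=
      Filter.isCoboundedUnder_le_of_eventually_le Filter.atTop (x := 0)
        (Filter.Eventually.of_forall (fun n =>
          div_nonneg (Nat.cast_nonneg _) (Nat.cast_nonneg _)))
    have h := Filter.limsup_le_limsup hev hco Filter.isBoundedUnder_const
    rwa [Filter.limsup_const] at h
  · refine ⟨gf, gf_tendsto, 3, ?_⟩
    intro n hn e heC hcond
    have hC := choose3_pos hn
    have hC0 : (n.choose 3 : ℝ) ≠ 0 := ne_of_gt hC
    have hE_le := Ecnt_le_choose n
    rcases hcond with hlow | hhigh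
    · have hkey : (1/4 - gf n) * (n.choose 3 : ℝ)
          = (n.choose 3 : ℝ)/2 - (Ecnt n : ℝ) := by
        unfold gf
        field_simp
        ring
      have hEl : ((n.choose 3 : ℕ):ℝ) ≤ 4*(Ecnt n : ℝ) := by exact_mod_cast Ecnt_lower n
      have he : (e:ℝ) ≤ (Ecnt n : ℝ) := by
        rw [hkey] at hlow
        linarith
      obtain ⟨G, h3, hcard, hno⟩ := low_case n e (by exact_mod_cast he)
      exact ⟨G, h3, hcard, by rintro ⟨S, hS6, h10⟩; exact hno S hS6 h10⟩
    · have hkey : (3/4 - gf n) * (n.choose 3 : ℝ)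
          = (n.choose 3 : ℝ) - (Ecnt n : ℝ) := by
        unfold gf
        field_simp
        ring
      have he : ((n.choose 3 - Ecnt n : ℕ) : ℝ) ≤ (e:ℝ) := by
        rw [Nat.cast_sub hE_le, ← hkey]
        exact hhigh
      obtain ⟨G, h3, hcard, hno⟩ := high_case n e (by exact_mod_cast he) heC
      exact ⟨G, h3, hcard, by rintro ⟨S, hS6, h10⟩; exact hno S hS6 h10⟩
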